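/- Let g_i be defined by g_0 = 1, g_1(λ) = λ, g_i(λ) = (d(n−i+1)+1)·λ·g_{i-1}(λ) − d(n−i+1)·g_{i-2}(λ) for i ∈ [2,n], and g_{n+1}(λ) = d(0)·(λ·g_n(λ) − g_{n-1}(λ)), with d(n) = 0 and d(i) ≥ 1 for i < n. Let p_i be defined by p_0 = 1, p_1(λ) = λ, and p_i(λ) = λ·p_{i-1}(λ) − D_{n−i+1}·p_{i-2}(λ), where D_i = d(i)/((d(i)+1)(d(i+1)+1)) for i ∈ [1,n−1] and D_0 = 1/(d(1)+1). Then p_i equals the monic normalization of g_i for all i ∈ [0, n+1]. -/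

import Mathlib

open Polynomial

noncomputable def cAux (n : ℕ) (d : ℕ → ℕ) : ℕ → ℝ
  | 0 => 1
  | 1 => 1
  | (j + 2) =>
      (if j + 2 = n + 1 then (d 0 : ℝ) else ((d (n + 1 - (j + 2)) : ℝ) + 1)) * cAux n d (j + 1)

theorem p_eq_monic_normalization_of_g (n : ℕ) (hn : 1 ≤ n) (d : ℕ → ℕ)
    (hdn : d n = 0) (hd : ∀ i, i < n → 1 ≤ d i)
    (D : ℕ → ℝ)
    (hD0 : D 0 = 1 / ((d 1 : ℝ) + 1))
    (hDi : ∀ i, 1 ≤ i → i ≤ n - 1 →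
      D i = (d i : ℝ) / (((d i : ℝ) + 1) * ((d (i + 1) : ℝ) + 1)))
    (g : ℕ → Polynomial ℝ)
    (hg0 : g 0 = 1) (hg1 : g 1 = X)
    (hgrec : ∀ i, 2 ≤ i → i ≤ n →
      g i = C ((d (n + 1 - i) : ℝ) + 1) * X * g (i - 1) - C (d (n + 1 - i) : ℝ) * g (i - 2))
    (hgtop : g (n + 1) = C (d 0 : ℝ) * (X * g n - g (n - 1)))
    (p : ℕ → Polynomial ℝ)
    (hp0 : p 0 = 1) (hp1 : p 1 = X)
    (hprec : ∀ i, 2 ≤ i → i ≤ n + 1 →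
      p i = X * p (i - 1) - C (D (n + 1 - i)) * p (i - 2)) :
    ∀ i, i ≤ n + 1 → p i = C ((g i).leadingCoeff)⁻¹ * g i := by
  set c := cAux n d with hc
  -- auxiliary: c (j+1) = (d (n - j) + 1) * c j  for j ≤ n - 1
  have hcc : ∀ j, j ≤ n - 1 → c (j + 1) = ((d (n - j) : ℝ) + 1) * c j := by
    intro j hj
    match j with
    | 0 =>
      simp only [hc, cAux, Nat.sub_zero, hdn]
      norm_num
    | (j + 1) =>
      have hne : j + 2 ≠ n + 1 := by omega
      have : n + 1 - (j + 2) = n - (j + 1) := by omega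
      simp only [hc, cAux, if_neg hne, this]
  have key : ∀ i, i ≤ n + 1 →
      (p i).Monic ∧ (p i).natDegree = i ∧ 0 < c i ∧ g i = C (c i) * p i := by
    intro i
    induction i using Nat.strong_induction_on with
    | _ i IH =>
      match i with
      | 0 =>
        intro _
        refine ⟨by simp [hp0], by simp [hp0], by norm_num [hc, cAux], by simp [hp0, hg0, hc, cAux]⟩
      | 1 =>
        intro _
        refine ⟨by simp [hp1, monic_X], by simp [hp1], by norm_num [hc, cAux],
          by simp [hp1, hg1, hc, cAux]⟩
      | (j + 2) =>
        intro h
        obtain ⟨m1, nd1, pos1, e1⟩ := IH (j + 1) (by omega) (by omega)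
        obtain ⟨m0, nd0, pos0, e0⟩ := IH j (by omega) (by omega)
        have hp2 : p (j + 2) = X * p (j + 1) - C (D (n + 1 - (j + 2))) * p j := by
          have := hprec (j + 2) (by omega) h
          simpa using this
        -- degree facts
        have hm1 : (X * p (j + 1)).Monic := monic_X.mul m1
        have hd1 : (X * p (j + 1)).natDegree = j + 2 := by
          rw [monic_X.natDegree_mul m1, natDegree_X, nd1]; omega
        have hlt : (C (D (n + 1 - (j + 2))) * p j).degree < (X * p (j + 1)).degree := by
          have h1 : (C (D (n + 1 - (j + 2))) * p j).degree ≤ (j : WithBot ℕ) := by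
            calc (C (D (n + 1 - (j + 2))) * p j).degree
                ≤ (C (D (n + 1 - (j + 2)))).degree + (p j).degree := degree_mul_le _ _
              _ ≤ 0 + (p j).degree := add_le_add_left degree_C_le _
              _ = (p j).degree := by rw [zero_add]
              _ = (j : WithBot ℕ) := by rw [degree_eq_natDegree m0.ne_zero, nd0]
          have h2 : (X * p (j + 1)).degree = ((j + 2 : ℕ) : WithBot ℕ) := by
            rw [degree_eq_natDegree hm1.ne_zero, hd1]
          rw [h2]
          exact lt_of_le_of_lt h1 (by exact_mod_cast Nat.lt_succ_of_lt (Nat.lt_succ_self j))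
        have hmon : (p (j + 2)).Monic := by
          rw [hp2]; exact hm1.sub_of_left hlt
        have hdeg : (p (j + 2)).natDegree = j + 2 := by
          rw [hp2]
          have := degree_sub_eq_left_of_degree_lt hlt
          have h2 : (X * p (j + 1) - C (D (n + 1 - (j + 2))) * p j).degree
              = ((j + 2 : ℕ) : WithBot ℕ) := by
            rw [this, degree_eq_natDegree hm1.ne_zero, hd1]
          exact natDegree_eq_of_degree_eq_some h2
        by_cases htop : j + 2 = n + 1
        · -- top case
          have hj : j = n - 1 := by omega
          have hDidx : n + 1 - (j + 2) = 0 := by omega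
          have hcval : c (j + 2) = (d 0 : ℝ) * c (j + 1) := by
            simp only [hc, cAux, if_pos htop]
          have hccj : c (j + 1) = ((d 1 : ℝ) + 1) * c j := by
            have := hcc j (by omega)
            rwa [show n - j = 1 by omega] at this
          have pos2 : 0 < c (j + 2) := by
            rw [hcval]
            have : (1 : ℝ) ≤ (d 0 : ℝ) := by exact_mod_cast hd 0 (by omega)
            nlinarith
          have hd1ne : ((d 1 : ℝ) + 1) ≠ 0 := by positivity
          have e2 : (d 0 : ℝ) * c j = c (j + 2) * D 0 := by
            rw [hcval, hccj, hD0]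
            field_simp
          have hgval : g (j + 2) = C (c (j + 2)) * p (j + 2) := by
            have hgt : g (j + 2) = C (d 0 : ℝ) * (X * g (j + 1) - g j) := by
              rw [show j + 2 = n + 1 from htop, hgtop,
                show n - 1 = j by omega, show n = j + 1 by omega]
            rw [hgt, hp2, hDidx, e1, e0]
            have E1 : (C (c (j + 2)) : ℝ[X]) = C (d 0 : ℝ) * C (c (j + 1)) := by
              rw [hcval, C_mul]
            have E2 : (C ((d 0 : ℝ) * c j) : ℝ[X]) = C (c (j + 2)) * C (D 0) := by
              rw [e2, C_mul]
            rw [C_mul] at E2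
            linear_combination (X * p (j + 1)) * E1.symm - p j * E2
          exact ⟨hmon, hdeg, pos2, hgval⟩
        · -- middle case: j + 2 ≤ n
          have hle : j + 2 ≤ n := by omega
          set k := n + 1 - (j + 2) with hk
          have hk1 : 1 ≤ k := by omega
          have hk2 : k ≤ n - 1 := by omega
          have hcval : c (j + 2) = ((d k : ℝ) + 1) * c (j + 1) := by
            simp [hc, cAux, htop, hk]
          have hccj : c (j + 1) = ((d (k + 1) : ℝ) + 1) * c j := by
            have := hcc j (by omega)
            rwa [show n - j = k + 1 by omega] at this
          have pos2 : 0 < c (j + 2) := by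
            rw [hcval]; positivity
          have hdk : D k = (d k : ℝ) / (((d k : ℝ) + 1) * ((d (k + 1) : ℝ) + 1)) :=
            hDi k hk1 hk2
          have hne1 : ((d k : ℝ) + 1) ≠ 0 := by positivity
          have hne2 : ((d (k + 1) : ℝ) + 1) ≠ 0 := by positivity
          have e2 : (d k : ℝ) * c j = c (j + 2) * D k := by
            rw [hcval, hccj, hdk]
            field_simp
          have hgval : g (j + 2) = C (c (j + 2)) * p (j + 2) := by
            have hgt : g (j + 2)
                = C ((d k : ℝ) + 1) * X * g (j + 1) - C (d k : ℝ) * g j := by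
              have := hgrec (j + 2) (by omega) hle
              simpa [← hk] using this
            rw [hgt, hp2, e1, e0]
            have E1 : (C (c (j + 2)) : ℝ[X]) = C ((d k : ℝ) + 1) * C (c (j + 1)) := by
              rw [hcval, C_mul]
            have E2 : (C (d k : ℝ) * C (c j) : ℝ[X]) = C (c (j + 2)) * C (D k) := by
              rw [← C_mul, e2, C_mul]
            linear_combination (X * p (j + 1)) * E1.symm - p j * E2
          exact ⟨hmon, hdeg, pos2, hgval⟩
  intro i hi
  obtain ⟨hmon, _, hpos, hgval⟩ := key i hi
  have hlc : (g i).leadingCoeff = c i := by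
    rw [hgval, leadingCoeff_mul, leadingCoeff_C, hmon.leadingCoeff, mul_one]
  rw [hlc, hgval, ← mul_assoc, ← C_mul, inv_mul_cancel₀ hpos.ne', C_1, one_mul]
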